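/- There are no integers a, b, c with gcd(a,b) = 1 and c^l = 3a^4 + 12a^2b^2 + 2b^4 for any integer l > 1 such that 3 divides c. -/

import Mathlib

lemma aux9 : ∀ x y : ZMod 9, 3*x^4 + 12*x^2*y^2 + 2*y^4 = 0 →
    (ZMod.castHom (by norm_num : (3:ℕ) ∣ 9) (ZMod 3) x = 0 ∧
     ZMod.castHom (by norm_num : (3:ℕ) ∣ 9) (ZMod 3) y = 0) := by decide

theorem stmt_3 :
    ¬ ∃ (a b c : ℤ) (l : ℕ), 1 < l ∧ Int.gcd a b = 1 ∧
      c ^ l = 3 * a ^ 4 + 12 * a ^ 2 * b ^ 2 + 2 * b ^ 4 ∧ 3 ∣ c := by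
  rintro ⟨a, b, c, l, hl, hg, heq, hc⟩
  have h9 : (9 : ℤ) ∣ 3 * a ^ 4 + 12 * a ^ 2 * b ^ 2 + 2 * b ^ 4 := by
    rw [← heq]
    obtain ⟨k, rfl⟩ := hc
    have h2 : (3*k) ^ l = (3*k) ^ 2 * (3*k) ^ (l - 2) := by
      rw [← pow_add]; congr 1; omega
    exact ⟨k ^ 2 * (3*k) ^ (l - 2), by rw [h2]; ring⟩
  have hz : (3 * (a : ZMod 9) ^ 4 + 12 * a ^ 2 * b ^ 2 + 2 * b ^ 4) = 0 := by
    have := (ZMod.intCast_zmod_eq_zero_iff_dvd _ 9).mpr h9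
    push_cast at this
    linear_combination this
  obtain ⟨ha, hb⟩ := aux9 (a : ZMod 9) (b : ZMod 9) hz
  have ha3 : (3 : ℤ) ∣ a := by
    have := (ZMod.intCast_zmod_eq_zero_iff_dvd a 3).mp (by simpa using ha)
    exact_mod_cast this
  have hb3 : (3 : ℤ) ∣ b := by
    have := (ZMod.intCast_zmod_eq_zero_iff_dvd b 3).mp (by simpa using hb)
    exact_mod_cast this
  have : (3 : ℤ) ∣ (Int.gcd a b : ℤ) := Int.dvd_coe_gcd ha3 hb3
  rw [hg] at this
  norm_num at this
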